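/- Let S, Ŝ, A be measurable spaces, φ : S → Ŝ measurable, P a Markov kernel from S × A to S, P̂ a Markov kernel from Ŝ × A to Ŝ, r and r̂ bounded measurable rewards with |r| ≤ R_max and |r̂| ≤ R_max, γ ∈ (0,1), π̂ a Markov kernel from Ŝ to A, and π(s) := π̂(φ(s)). Assume the homomorphism conditions r(s,a) = r̂(φ(s),a) and φ_# P(s,a) = P̂(φ(s),a) for all (s,a). Let T and T̂ be the policy-evaluation Bellman operators of (P, r, π) and (P̂, r̂, π̂) respectively, and let V̂ : Ŝ → ℝ be a bounded measurable fixed point of T̂. Then V̂ ∘ φ is a bounded measurable fixed point of T; consequently, if V : S → ℝ is any bounded measurable fixed point of T, then V(s) = V̂(φ(s)) for all s ∈ S. -/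

import Mathlib

open MeasureTheory ProbabilityTheory

/-- The policy-evaluation Bellman operator of transitions `P`, reward `r`, policy `π`,
and discount `γ`: `(T V)(s) = ∫_A (r(s,a) + γ ∫ V(s') dP(s,a)(s')) dπ(s)(a)`. -/
noncomputable def policyEval {S A : Type*} [MeasurableSpace S] [MeasurableSpace A]
    (P : Kernel (S × A) S) (r : S × A → ℝ) (π : Kernel S A) (γ : ℝ)
    (V : S → ℝ) : S → ℝ :=
  fun s => ∫ a, (r (s, a) + γ * ∫ s', V s' ∂(P (s, a))) ∂(π s)

/-- **Exact abstraction preserves policy values.**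
Under the homomorphism conditions, the pullback `Vh ∘ φ` of an abstract bounded measurable
fixed point `Vh` of the abstract policy-evaluation operator is a fixed point of the
concrete operator; consequently any bounded measurable concrete fixed point `V` satisfies
`V s = Vh (φ s)` for all `s`. -/
theorem exact_abstraction_preserves_values
    {S Sh A : Type*} [MeasurableSpace S] [MeasurableSpace Sh] [MeasurableSpace A]
    (φ : S → Sh) (hφ : Measurable φ)
    (P : Kernel (S × A) S) [IsMarkovKernel P]
    (Ph : Kernel (Sh × A) Sh) [IsMarkovKernel Ph]
    (r : S × A → ℝ) (rh : Sh × A → ℝ)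
    (hr : Measurable r) (hrh : Measurable rh)
    (Rmax : ℝ) (hrbd : ∀ p, |r p| ≤ Rmax) (hrhbd : ∀ p, |rh p| ≤ Rmax)
    (γ : ℝ) (hγ0 : 0 < γ) (hγ1 : γ < 1)
    (πh : Kernel Sh A) [IsMarkovKernel πh]
    (hom_r : ∀ s a, r (s, a) = rh (φ s, a))
    (hom_P : ∀ s a, (P (s, a)).map φ = Ph (φ s, a))
    (Vh : Sh → ℝ) (hVhmeas : Measurable Vh) (hVhbd : ∃ M : ℝ, ∀ sh, |Vh sh| ≤ M)
    (hVhfix : policyEval Ph rh πh γ Vh = Vh) :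
    policyEval P r (πh.comap φ hφ) γ (Vh ∘ φ) = Vh ∘ φ ∧
    (∀ V : S → ℝ, Measurable V → (∃ M : ℝ, ∀ s, |V s| ≤ M) →
      policyEval P r (πh.comap φ hφ) γ V = V → ∀ s, V s = Vh (φ s)) := by
  obtain ⟨M, hM⟩ := hVhbd
  have part1 : policyEval P r (πh.comap φ hφ) γ (Vh ∘ φ) = Vh ∘ φ := by
    funext s
    have h1 : ∀ a : A, ∫ s', (Vh ∘ φ) s' ∂(P (s, a)) = ∫ sh, Vh sh ∂(Ph (φ s, a)) := by
      intro a
      rw [← hom_P s a, integral_map hφ.aemeasurable hVhmeas.aestronglyMeasurable]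
      rfl
    simp only [policyEval, Kernel.comap_apply, Function.comp_apply]
    calc ∫ a, (r (s, a) + γ * ∫ s', (Vh ∘ φ) s' ∂(P (s, a))) ∂(πh (φ s))
        = ∫ a, (rh (φ s, a) + γ * ∫ sh, Vh sh ∂(Ph (φ s, a))) ∂(πh (φ s)) := by
          refine integral_congr_ae (Filter.Eventually.of_forall fun a => ?_)
          simp only []
          rw [hom_r, h1]
      _ = Vh (φ s) := congrFun hVhfix (φ s)
  refine ⟨part1, ?_⟩
  rintro V hVmeas ⟨MV, hMV⟩ hVfix s₀
  set W : S → ℝ := Vh ∘ φ with hW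
  have hWmeas : Measurable W := hVhmeas.comp hφ
  have hWbd : ∀ s, |W s| ≤ M := fun s => hM (φ s)
  set C : ℝ := MV + M with hC
  -- integrability facts
  have hintV : ∀ (U : S → ℝ) (MU : ℝ), Measurable U → (∀ s, |U s| ≤ MU) →
      ∀ s a, Integrable U (P (s, a)) := by
    intro U MU hUm hUb s a
    exact (integrable_const MU).mono' hUm.aestronglyMeasurable
      (Filter.Eventually.of_forall fun x => by simpa using hUb x)
  have hmeasInt : ∀ (U : S → ℝ), Measurable U →
      ∀ s : S, StronglyMeasurable fun a : A => ∫ s', U s' ∂(P (s, a)) := by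
    intro U hUm s
    exact (hUm.comp measurable_snd).stronglyMeasurable.integral_kernel_prod_right'' (η := P) (a := s)
  have hintOuter : ∀ (U : S → ℝ) (MU : ℝ), Measurable U → (∀ s, |U s| ≤ MU) →
      ∀ s : S, Integrable (fun a => r (s, a) + γ * ∫ s', U s' ∂(P (s, a))) (πh (φ s)) := by
    intro U MU hUm hUb s
    have hmeas : AEStronglyMeasurable (fun a => r (s, a) + γ * ∫ s', U s' ∂(P (s, a)))
        (πh (φ s)) :=
      ((hr.comp measurable_prodMk_left).stronglyMeasurable.add
        (stronglyMeasurable_const.mul (hmeasInt U hUm s))).aestronglyMeasurable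
    refine (integrable_const (Rmax + γ * MU)).mono' hmeas
      (Filter.Eventually.of_forall fun a => ?_)
    have h1 : |∫ s', U s' ∂(P (s, a))| ≤ MU := by
      have := norm_integral_le_of_norm_le_const (μ := P (s, a)) (f := U) (C := MU)
        (Filter.Eventually.of_forall fun x => by simpa using hUb x)
      simpa using this
    calc ‖r (s, a) + γ * ∫ s', U s' ∂(P (s, a))‖
        ≤ |r (s, a)| + |γ * ∫ s', U s' ∂(P (s, a))| := abs_add_le _ _
      _ ≤ Rmax + γ * MU := by
          refine add_le_add (hrbd _) ?_
          rw [abs_mul, abs_of_pos hγ0]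
          exact mul_le_mul_of_nonneg_left h1 hγ0.le
  -- induction bound
  have main : ∀ n : ℕ, ∀ s : S, |V s - W s| ≤ γ ^ n * C := by
    intro n
    induction n with
    | zero =>
      intro s
      simp only [pow_zero, one_mul, hC]
      calc |V s - W s| ≤ |V s| + |W s| := abs_sub _ _
        _ ≤ MV + M := add_le_add (hMV s) (hWbd s)
    | succ n ih =>
      intro s
      have hsub : V s - W s
          = ∫ a, γ * ((∫ s', V s' ∂(P (s, a))) - ∫ s', W s' ∂(P (s, a))) ∂(πh (φ s)) := by
        conv_lhs => rw [← hVfix, ← part1]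
        simp only [policyEval, Kernel.comap_apply]
        rw [← integral_sub (hintOuter V MV hVmeas hMV s) (hintOuter W M hWmeas hWbd s)]
        refine integral_congr_ae (Filter.Eventually.of_forall fun a => ?_)
        simp only []
        ring
      rw [hsub]
      have hbd : ∀ a : A,
          ‖γ * ((∫ s', V s' ∂(P (s, a))) - ∫ s', W s' ∂(P (s, a)))‖ ≤ γ * (γ ^ n * C) := by
        intro a
        rw [Real.norm_eq_abs, abs_mul, abs_of_pos hγ0]
        refine mul_le_mul_of_nonneg_left ?_ hγ0.le
        rw [← integral_sub (hintV V MV hVmeas hMV s a) (hintV W M hWmeas hWbd s a)]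
        have := norm_integral_le_of_norm_le_const (μ := P (s, a))
          (f := fun s' => V s' - W s') (C := γ ^ n * C)
          (Filter.Eventually.of_forall fun x => by simpa using ih x)
        simpa using this
      have := norm_integral_le_of_norm_le_const (μ := πh (φ s))
        (f := fun a => γ * ((∫ s', V s' ∂(P (s, a))) - ∫ s', W s' ∂(P (s, a))))
        (C := γ * (γ ^ n * C)) (Filter.Eventually.of_forall hbd)
      simp only [probReal_univ, mul_one, Real.norm_eq_abs] at this
      calc |_| ≤ γ * (γ ^ n * C) := this
        _ = γ ^ (n + 1) * C := by ring
  -- take limit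
  have hlim : Filter.Tendsto (fun n : ℕ => γ ^ n * C) Filter.atTop (nhds 0) := by
    simpa using (tendsto_pow_atTop_nhds_zero_of_lt_one hγ0.le hγ1).mul_const C
  have hle : |V s₀ - W s₀| ≤ 0 := ge_of_tendsto' hlim fun n => main n s₀
  have : V s₀ - W s₀ = 0 := abs_eq_zero.mp (le_antisymm hle (abs_nonneg _))
  have : V s₀ = W s₀ := sub_eq_zero.mp this
  simpa [hW] using this
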